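/- arXiv:1701.03040 — 3 statements merged into one kernel-verified Lean document; each statement's English description precedes it below -/
import Mathlib

section
/- For any unicyclic non-König-Egerváry graph G (possibly disconnected), the critical difference satisfies d_c(G) = α(G) − μ(G). -/
open Classical Finset

/-- Neighborhood of a set of vertices: all vertices adjacent to some vertex of `X`. -/
noncomputable def nbhd {V : Type*} (G : SimpleGraph V) [Fintype V] (X : Finset V) : Finset V :=
  Finset.univ.filter (fun v => ∃ x ∈ X, G.Adj x v)

/-- The difference `d(X) = |X| - |N(X)|`. -/
noncomputable def gdiff {V : Type*} (G : SimpleGraph V) [Fintype V] (X : Finset V) : ℤ :=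
  (X.card : ℤ) - ((nbhd G X).card : ℤ)

/-- `X` is an independent set of `G`. -/
def IsIndep {V : Type*} (G : SimpleGraph V) (X : Finset V) : Prop :=
  ∀ x ∈ X, ∀ y ∈ X, ¬ G.Adj x y

/-- The critical difference `d_c(G) = max { d(X) : X ⊆ V(G) }`. -/
noncomputable def critDiff {V : Type*} (G : SimpleGraph V) [Fintype V] : ℤ :=
  Finset.univ.powerset.sup' ⟨∅, Finset.empty_mem_powerset _⟩ (gdiff G)

/-- `X` is a critical set of `G`. -/
noncomputable def IsCritical {V : Type*} (G : SimpleGraph V) [Fintype V] (X : Finset V) : Prop :=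
  gdiff G X = critDiff G

/-- `ker G` : the intersection of all critical sets of `G`. -/
noncomputable def kerG {V : Type*} (G : SimpleGraph V) [Fintype V] : Finset V :=
  Finset.univ.filter (fun v => ∀ X : Finset V, IsCritical G X → v ∈ X)

/-- `diadem G` : the union of all critical independent sets of `G`. -/
noncomputable def diademG {V : Type*} (G : SimpleGraph V) [Fintype V] : Finset V :=
  Finset.univ.filter (fun v => ∃ X : Finset V, IsCritical G X ∧ IsIndep G X ∧ v ∈ X)

/-- The independence number `α(G)`. -/
noncomputable def alphaG {V : Type*} (G : SimpleGraph V) [Fintype V] : ℕ :=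
  (Finset.univ.powerset.filter (IsIndep G)).sup Finset.card

/-- `core G` : the intersection of all maximum independent sets of `G`. -/
noncomputable def coreG {V : Type*} (G : SimpleGraph V) [Fintype V] : Finset V :=
  Finset.univ.filter (fun v => ∀ I : Finset V, IsIndep G I → I.card = alphaG G → v ∈ I)

/-- `M` is a matching of `G`, given as a finite set of pairwise disjoint edges of `G`. -/
def IsMatchingF {V : Type*} (G : SimpleGraph V) (M : Finset (Sym2 V)) : Prop :=
  (↑M : Set (Sym2 V)) ⊆ G.edgeSet ∧
    ∀ e₁ ∈ M, ∀ e₂ ∈ M, e₁ ≠ e₂ → ∀ v : V, v ∈ e₁ → v ∉ e₂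

/-- The matching number `μ(G)`. -/
noncomputable def matchNum {V : Type*} (G : SimpleGraph V) [Fintype V] : ℕ :=
  ((Finset.univ : Finset (Finset (Sym2 V))).filter (IsMatchingF G)).sup Finset.card

/-- There is a matching from `A` into `B`: an injection of `A` into `B` along edges of `G`. -/
def MatchingFromInto {V : Type*} (G : SimpleGraph V) (A B : Finset V) : Prop :=
  ∃ f : V → V, Set.InjOn f ↑A ∧ ∀ a ∈ A, f a ∈ B ∧ G.Adj a (f a)

/-- The auxiliary bipartite graph `H_X` on vertex set `X ∪ N(X) ∪ {v, w}`, where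
`v = Sum.inr false` and `w = Sum.inr true`.  Its edges are the edges of `G` between
`X` and `N(X)`, the edge `vw`, and all edges from `v` to `N(X)`. -/
noncomputable def HX {V : Type*} (G : SimpleGraph V) [Fintype V] (X : Finset V) :
    SimpleGraph ({a : V // a ∈ X ∪ nbhd G X} ⊕ Bool) :=
  SimpleGraph.fromRel (fun p q =>
    match p, q with
    | Sum.inl a, Sum.inl b => a.1 ∈ X ∧ b.1 ∈ nbhd G X ∧ G.Adj a.1 b.1
    | Sum.inr false, Sum.inr true => True
    | Sum.inr false, Sum.inl b => b.1 ∈ nbhd G X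
    | _, _ => False)

/-- The copy of `X` inside the vertex set of `H_X`. -/
noncomputable def Xlift {V : Type*} (G : SimpleGraph V) [Fintype V] (X : Finset V) :
    Finset ({a : V // a ∈ X ∪ nbhd G X} ⊕ Bool) :=
  Finset.univ.filter (fun p => ∃ a : {a : V // a ∈ X ∪ nbhd G X}, p = Sum.inl a ∧ a.1 ∈ X)

/-- Edmonds–Gallai set `D`: vertices missed by some maximum matching. -/
noncomputable def gallaiD {V : Type*} (G : SimpleGraph V) [Fintype V] : Finset V :=
  Finset.univ.filter (fun v => ∃ M : Finset (Sym2 V),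
    IsMatchingF G M ∧ M.card = matchNum G ∧ ∀ e ∈ M, v ∉ e)

/-- Edmonds–Gallai set `A = N(D) - D`. -/
noncomputable def gallaiA {V : Type*} (G : SimpleGraph V) [Fintype V] : Finset V :=
  nbhd G (gallaiD G) \ gallaiD G

/-- Edmonds–Gallai set `C = V - A - D`. -/
noncomputable def gallaiC {V : Type*} (G : SimpleGraph V) [Fintype V] : Finset V :=
  (Finset.univ \ gallaiD G) \ gallaiA G

/-- The vertices of the singleton components of `G[D]`. -/
noncomputable def singlesD {V : Type*} (G : SimpleGraph V) [Fintype V] : Finset V :=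
  (gallaiD G).filter (fun v => ∀ w ∈ gallaiD G, ¬ G.Adj v w)

set_option linter.unusedSectionVars false
set_option maxHeartbeats 1000000

section S1
variable {V : Type*} (G : SimpleGraph V) [Fintype V] [DecidableEq V]

lemma mem_nbhd {X : Finset V} {v : V} : v ∈ nbhd G X ↔ ∃ x ∈ X, G.Adj x v := by
  simp [nbhd]

lemma gdiff_le_critDiff (X : Finset V) : gdiff G X ≤ critDiff G :=
  Finset.le_sup' (gdiff G) (Finset.mem_powerset.2 (Finset.subset_univ X))

lemma exists_critical : ∃ X : Finset V, gdiff G X = critDiff G := by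
  obtain ⟨X, -, hX⟩ := Finset.exists_mem_eq_sup' (α := ℤ)
    ⟨∅, Finset.empty_mem_powerset _⟩ (gdiff G)
  exact ⟨X, hX.symm⟩

lemma nbhd_empty : nbhd G (∅ : Finset V) = ∅ := by
  ext v; simp [nbhd]

lemma critDiff_nonneg : 0 ≤ critDiff G := by
  have := gdiff_le_critDiff G (∅ : Finset V)
  simpa [gdiff, nbhd_empty] using this

lemma indep_card_le_alphaG {I : Finset V} (hI : IsIndep G I) : I.card ≤ alphaG G :=
  Finset.le_sup (by simp [hI])

lemma exists_max_indep : ∃ I : Finset V, IsIndep G I ∧ I.card = alphaG G := by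
  classical
  obtain ⟨I, hI, h⟩ := Finset.exists_mem_eq_sup
    ((Finset.univ.powerset).filter (IsIndep G))
    ⟨∅, by simp [IsIndep]⟩ Finset.card
  exact ⟨I, (Finset.mem_filter.1 hI).2, h.symm⟩

lemma matching_card_le_matchNum {M : Finset (Sym2 V)} (hM : IsMatchingF G M) :
    M.card ≤ matchNum G :=
  Finset.le_sup (by simp [hM])

lemma exists_max_matching : ∃ M : Finset (Sym2 V), IsMatchingF G M ∧ M.card = matchNum G := by
  classical
  obtain ⟨M, hM, h⟩ := Finset.exists_mem_eq_sup
    ((Finset.univ : Finset (Finset (Sym2 V))).filter (IsMatchingF G))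
    ⟨∅, by simp [IsMatchingF]⟩ Finset.card
  exact ⟨M, (Finset.mem_filter.1 hM).2, h.symm⟩

end S1

section S2
variable {V : Type*} {G : SimpleGraph V} [Fintype V] [DecidableEq V]

lemma nbhd_mono {X Y : Finset V} (h : X ⊆ Y) : nbhd G X ⊆ nbhd G Y := by
  intro a ha
  rw [mem_nbhd] at ha ⊢
  obtain ⟨x, hx, hadj⟩ := ha
  exact ⟨x, h hx, hadj⟩

lemma nbhd_le {H : SimpleGraph V} (hle : H ≤ G) (X : Finset V) : nbhd H X ⊆ nbhd G X := by
  intro a ha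
  rw [mem_nbhd] at ha ⊢
  obtain ⟨x, hx, hadj⟩ := ha
  exact ⟨x, hx, hle hadj⟩

lemma nbhd_insert_isolated {a : V} {X : Finset V} (h : ∀ x, ¬ G.Adj a x) :
    nbhd G (insert a X) = nbhd G X := by
  ext y
  simp only [mem_nbhd, Finset.mem_insert]
  constructor
  · rintro ⟨x, hx | hx, hadj⟩
    · exact absurd hadj (hx ▸ h y)
    · exact ⟨x, hx, hadj⟩
  · rintro ⟨x, hx, hadj⟩; exact ⟨x, Or.inr hx, hadj⟩

variable {v w : V}

/-- the graph obtained by deleting all edges at `w`. -/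
noncomputable def delAt (G : SimpleGraph V) (w : V) : SimpleGraph V :=
  G.deleteEdges {e : Sym2 V | w ∈ e}

lemma delAt_adj {a b : V} : (delAt G w).Adj a b ↔ G.Adj a b ∧ a ≠ w ∧ b ≠ w := by
  simp only [delAt, SimpleGraph.deleteEdges_adj, Set.mem_setOf_eq, Sym2.mem_iff]
  constructor
  · rintro ⟨h, h2⟩
    push_neg at h2
    exact ⟨h, fun hh => h2.1 hh.symm, fun hh => h2.2 hh.symm⟩
  · rintro ⟨h, h1, h2⟩
    exact ⟨h, by push_neg; exact ⟨fun hh => h1 hh.symm, fun hh => h2 hh.symm⟩⟩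

lemma delAt_le : delAt G w ≤ G := SimpleGraph.deleteEdges_le _

lemma delAt_isolated_w (x : V) : ¬ (delAt G w).Adj w x := by
  rw [delAt_adj]; rintro ⟨-, h, -⟩; exact h rfl

section pendant
variable (hvw : G.Adj v w) (hv : ∀ x, G.Adj v x → x = w)
include hvw hv

lemma delAt_isolated_v (x : V) : ¬ (delAt G w).Adj v x := by
  rw [delAt_adj]; rintro ⟨h, -, h2⟩; exact h2 (hv x h)

lemma alpha_pendant : alphaG (delAt G w) = alphaG G + 1 := by
  apply le_antisymm
  · -- α' ≤ α + 1
    obtain ⟨I, hI, hcard⟩ := exists_max_indep (delAt G w)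
    have hindep : IsIndep G (I.erase w) := by
      intro x hx y hy hadj
      have hx' := Finset.mem_of_mem_erase hx
      have hy' := Finset.mem_of_mem_erase hy
      exact hI x hx' y hy' (delAt_adj.2 ⟨hadj, Finset.ne_of_mem_erase hx,
        Finset.ne_of_mem_erase hy⟩)
    have h1 : I.card - 1 ≤ (I.erase w).card := by
      rw [Finset.card_erase_eq_ite]; split <;> omega
    have h2 := indep_card_le_alphaG G hindep
    omega
  · -- α + 1 ≤ α'
    obtain ⟨I, hI, hcard⟩ := exists_max_indep G
    have hnotboth : ¬ (v ∈ I ∧ w ∈ I) := by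
      rintro ⟨h1, h2⟩; exact hI v h1 w h2 hvw
    set c := if v ∈ I then w else v with hc
    have hcnot : c ∉ I := by
      rw [hc]; split
      · intro h; exact hnotboth ⟨by assumption, h⟩
      · assumption
    have hciso : ∀ x, ¬ (delAt G w).Adj c x := by
      rw [hc]; split
      · exact delAt_isolated_w
      · exact delAt_isolated_v hvw hv
    have hindep : IsIndep (delAt G w) (insert c I) := by
      intro x hx y hy hadj
      rcases Finset.mem_insert.1 hx with rfl | hx'
      · exact hciso y hadj
      · rcases Finset.mem_insert.1 hy with rfl | hy'
        · exact hciso x hadj.symm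
        · exact hI x hx' y hy' (delAt_le hadj)
    have := indep_card_le_alphaG (delAt G w) hindep
    rw [Finset.card_insert_of_notMem hcnot, hcard] at this
    omega

lemma matchNum_pendant : matchNum G = matchNum (delAt G w) + 1 := by
  have hGe : (delAt G w) ≤ G := delAt_le
  apply le_antisymm
  · -- μ ≤ μ' + 1
    obtain ⟨M, hM, hcard⟩ := exists_max_matching G
    classical
    set M' := M.filter (fun e => w ∉ e) with hM'def
    have hM'sub : M' ⊆ M := Finset.filter_subset _ _
    have hM'match : IsMatchingF (delAt G w) M' := by
      constructor
      · intro e he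
        have he' := Finset.mem_filter.1 he
        have : e ∈ G.edgeSet := hM.1 he'.1
        rw [delAt, SimpleGraph.edgeSet_deleteEdges]
        exact ⟨this, he'.2⟩
      · intro e₁ h₁ e₂ h₂ hne x hx
        exact hM.2 e₁ (hM'sub h₁) e₂ (hM'sub h₂) hne x hx
    have hsmall : M.card ≤ M'.card + 1 := by
      -- at most one edge contains w
      have : (M.filter (fun e => w ∈ e)).card ≤ 1 := by
        rw [Finset.card_le_one]
        intro e₁ h₁ e₂ h₂
        have he₁ := Finset.mem_filter.1 h₁
        have he₂ := Finset.mem_filter.1 h₂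
        by_contra hne
        exact hM.2 e₁ he₁.1 e₂ he₂.1 hne w he₁.2 he₂.2
      have := Finset.card_filter_add_card_filter_not
        (s := M) (p := fun e => w ∈ e)
      have hbc : (M.filter (fun e => w ∉ e)).card = M'.card := rfl
      omega
    have := matching_card_le_matchNum (delAt G w) hM'match
    omega
  · -- μ' + 1 ≤ μ
    obtain ⟨M', hM', hcard⟩ := exists_max_matching (delAt G w)
    have hnovw : ∀ e ∈ M', v ∉ e ∧ w ∉ e := by
      intro e he
      have he' : e ∈ (delAt G w).edgeSet := hM'.1 he
      induction e using Sym2.ind with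
      | _ a b =>
        rw [SimpleGraph.mem_edgeSet, delAt_adj] at he'
        constructor
        · rw [Sym2.mem_iff]
          rintro (rfl | rfl)
          · exact delAt_isolated_v hvw hv b (delAt_adj.2 he')
          · exact delAt_isolated_v hvw hv a (delAt_adj.2 he').symm
        · rw [Sym2.mem_iff]
          rintro (rfl | rfl)
          · exact he'.2.1 rfl
          · exact he'.2.2 rfl
    have hnew : s(v, w) ∉ M' := fun h => (hnovw _ h).1 (Sym2.mem_mk_left v w)
    have hmatch : IsMatchingF G (insert s(v, w) M') := by
      constructor
      · intro e he
        rcases Finset.mem_insert.1 (by exact_mod_cast he) with rfl | he'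
        · exact hvw
        · exact SimpleGraph.edgeSet_mono hGe (hM'.1 he')
      · intro e₁ h₁ e₂ h₂ hne x hx
        rcases Finset.mem_insert.1 h₁ with rfl | h₁'
        · rcases Finset.mem_insert.1 h₂ with rfl | h₂'
          · exact absurd rfl hne
          · rw [Sym2.mem_iff] at hx
            rcases hx with rfl | rfl
            · exact (hnovw _ h₂').1
            · exact (hnovw _ h₂').2
        · rcases Finset.mem_insert.1 h₂ with rfl | h₂'
          · intro hx2
            rw [Sym2.mem_iff] at hx2
            rcases hx2 with rfl | rfl
            · exact (hnovw _ h₁').1 hx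
            · exact (hnovw _ h₁').2 hx
          · exact hM'.2 e₁ h₁' e₂ h₂' hne x hx
    have := matching_card_le_matchNum G hmatch
    rw [Finset.card_insert_of_notMem hnew, hcard] at this
    omega

lemma critDiff_pendant : critDiff (delAt G w) = critDiff G + 2 := by
  apply le_antisymm
  · -- critDiff Gp ≤ critDiff G + 2
    obtain ⟨X', hX'⟩ := exists_critical (delAt G w)
    set X'' := insert v (insert w X') with hX''def
    have hnbX'' : nbhd (delAt G w) X'' = nbhd (delAt G w) X' := by
      rw [hX''def, nbhd_insert_isolated (delAt_isolated_v hvw hv),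
        nbhd_insert_isolated delAt_isolated_w]
    have hcardX'' : (X'.card : ℤ) ≤ X''.card := by
      have h1 : X' ⊆ X'' := by
        intro x hx; exact Finset.mem_insert_of_mem (Finset.mem_insert_of_mem hx)
      exact_mod_cast Finset.card_le_card h1
    have hX''crit : gdiff (delAt G w) X'' = critDiff (delAt G w) := by
      apply le_antisymm (gdiff_le_critDiff _ _)
      rw [← hX']
      unfold gdiff
      rw [hnbX'']
      omega
    have hvX'' : v ∈ X'' := Finset.mem_insert_self _ _
    have hwX'' : w ∈ X'' := Finset.mem_insert_of_mem (Finset.mem_insert_self _ _)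
    set Y := (X''.erase v).erase w with hYdef
    have hYcard : (Y.card : ℤ) = X''.card - 2 := by
      rw [hYdef, Finset.card_erase_of_mem (Finset.mem_erase.2 ⟨hvw.ne.symm, hwX''⟩),
        Finset.card_erase_of_mem hvX'']
      have : 1 ≤ X''.card := Finset.card_pos.2 ⟨v, hvX''⟩
      have h2 : 2 ≤ X''.card := by
        refine Finset.one_lt_card.2 ⟨v, hvX'', w, hwX'', hvw.ne⟩
      push_cast
      omega
    have hYX'' : Y ⊆ X'' := by
      intro x hx; exact Finset.mem_of_mem_erase (Finset.mem_of_mem_erase hx)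
    have hwY : w ∉ Y := fun h => (Finset.mem_erase.1 h).1 rfl
    have hvY : v ∉ Y := fun h => (Finset.mem_erase.1 (Finset.mem_of_mem_erase h)).1 rfl
    have hnbY : nbhd G Y ⊆ insert w (nbhd (delAt G w) X'') := by
      intro y hy
      rw [mem_nbhd] at hy
      obtain ⟨x, hx, hadj⟩ := hy
      by_cases hyw : y = w
      · exact hyw ▸ Finset.mem_insert_self _ _
      · refine Finset.mem_insert_of_mem ?_
        rw [mem_nbhd]
        refine ⟨x, hYX'' hx, delAt_adj.2 ⟨hadj, ?_, hyw⟩⟩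
        intro hxw; exact hwY (hxw ▸ hx)
    by_cases hcase : w ∈ nbhd G Y
    · -- use Z = insert v Y
      set Z := insert v Y with hZdef
      have hZcard : (Z.card : ℤ) = Y.card + 1 := by
        rw [hZdef, Finset.card_insert_of_notMem hvY]; push_cast; ring
      have hnbZ : nbhd G Z ⊆ nbhd G Y := by
        intro y hy
        rw [mem_nbhd] at hy
        obtain ⟨x, hx, hadj⟩ := hy
        rcases Finset.mem_insert.1 hx with rfl | hx'
        · have : y = w := hv y hadj
          exact this ▸ hcase
        · rw [mem_nbhd]; exact ⟨x, hx', hadj⟩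
      have h1 : (nbhd G Z).card ≤ (nbhd G Y).card := Finset.card_le_card hnbZ
      have h2 : (nbhd G Y).card ≤ (nbhd (delAt G w) X'').card + 1 := by
        calc (nbhd G Y).card ≤ (insert w (nbhd (delAt G w) X'')).card :=
              Finset.card_le_card hnbY
          _ ≤ (nbhd (delAt G w) X'').card + 1 := Finset.card_insert_le _ _
      have h3 : gdiff G Z ≤ critDiff G := gdiff_le_critDiff _ _
      rw [← hX''crit]
      unfold gdiff at h3 ⊢
      push_cast at *
      omega
    · have h2 : (nbhd G Y).card ≤ (nbhd (delAt G w) X'').card := by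
        apply Finset.card_le_card
        intro y hy
        rcases Finset.mem_insert.1 (hnbY hy) with rfl | h
        · exact absurd hy hcase
        · exact h
      have h3 : gdiff G Y ≤ critDiff G := gdiff_le_critDiff _ _
      rw [← hX''crit]
      unfold gdiff at h3 ⊢
      push_cast at *
      omega
  · -- critDiff G + 2 ≤ critDiff Gp
    obtain ⟨X, hX⟩ := exists_critical G
    -- replace X by X.erase w
    have herase : gdiff G (X.erase w) = critDiff G ∧ w ∉ X.erase w := by
      refine ⟨?_, fun h => (Finset.mem_erase.1 h).1 rfl⟩
      by_cases hwX : w ∈ X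
      · apply le_antisymm (gdiff_le_critDiff _ _)
        rw [← hX]
        have hcard : ((X.erase w).card : ℤ) = X.card - 1 := by
          rw [Finset.card_erase_of_mem hwX]
          have : 1 ≤ X.card := Finset.card_pos.2 ⟨w, hwX⟩
          push_cast; omega
        have hnb : nbhd G (X.erase w) ⊆ (nbhd G X).erase v := by
          intro y hy
          rw [mem_nbhd] at hy
          obtain ⟨x, hx, hadj⟩ := hy
          refine Finset.mem_erase.2 ⟨?_, nbhd_mono (Finset.erase_subset _ _) (by
            rw [mem_nbhd]; exact ⟨x, hx, hadj⟩)⟩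
          rintro rfl
          exact (Finset.mem_erase.1 hx).1 (hv x hadj.symm)
        have hvnb : v ∈ nbhd G X := by
          rw [mem_nbhd]; exact ⟨w, hwX, hvw.symm⟩
        have h1 : (nbhd G (X.erase w)).card ≤ (nbhd G X).card - 1 := by
          calc (nbhd G (X.erase w)).card ≤ ((nbhd G X).erase v).card :=
                Finset.card_le_card hnb
            _ = (nbhd G X).card - 1 := Finset.card_erase_of_mem hvnb
        have h2 : 1 ≤ (nbhd G X).card := Finset.card_pos.2 ⟨v, hvnb⟩
        unfold gdiff
        have h1' : ((nbhd G (X.erase w)).card : ℤ) ≤ (nbhd G X).card - 1 := by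
          push_cast at h1 ⊢; omega
        omega
      · rw [Finset.erase_eq_of_notMem hwX, hX]
    obtain ⟨hXc, hwX⟩ := herase
    set X₀ := X.erase w with hX₀def
    by_cases hvX : v ∈ X₀
    · -- X₂ = insert w X₀ (v already in)
      set X₂ := insert v (insert w X₀) with hX₂def
      have hwX₀ : w ∉ X₀ := hwX
      have hcard : (X₂.card : ℤ) = X₀.card + 1 := by
        rw [hX₂def, Finset.insert_eq_self.2 (Finset.mem_insert_of_mem hvX),
          Finset.card_insert_of_notMem hwX₀]
        push_cast; ring
      have hnb : nbhd (delAt G w) X₂ ⊆ (nbhd G X₀).erase w := by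
        rw [hX₂def, nbhd_insert_isolated (delAt_isolated_v hvw hv),
          nbhd_insert_isolated delAt_isolated_w]
        intro y hy
        rw [mem_nbhd] at hy
        obtain ⟨x, hx, hadj⟩ := hy
        refine Finset.mem_erase.2 ⟨(delAt_adj.1 hadj).2.2, ?_⟩
        rw [mem_nbhd]
        exact ⟨x, hx, delAt_le hadj⟩
      have hwnb : w ∈ nbhd G X₀ := by
        rw [mem_nbhd]; exact ⟨v, hvX, hvw⟩
      have h1 : ((nbhd (delAt G w) X₂).card : ℤ) ≤ (nbhd G X₀).card - 1 := by
        have := Finset.card_le_card hnb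
        rw [Finset.card_erase_of_mem hwnb] at this
        have h2 : 1 ≤ (nbhd G X₀).card := Finset.card_pos.2 ⟨w, hwnb⟩
        push_cast at this ⊢; omega
      have := gdiff_le_critDiff (delAt G w) X₂
      rw [← hXc]
      unfold gdiff at this ⊢
      omega
    · set X₂ := insert v (insert w X₀) with hX₂def
      have hcard : (X₂.card : ℤ) = X₀.card + 2 := by
        rw [hX₂def, Finset.card_insert_of_notMem (by
            intro h
            rcases Finset.mem_insert.1 h with h' | h'
            · exact hvw.ne h'
            · exact hvX h'),
          Finset.card_insert_of_notMem hwX]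
        push_cast; ring
      have hnb : nbhd (delAt G w) X₂ ⊆ nbhd G X₀ := by
        rw [hX₂def, nbhd_insert_isolated (delAt_isolated_v hvw hv),
          nbhd_insert_isolated delAt_isolated_w]
        exact fun y hy => nbhd_le delAt_le _ hy
      have h1 : ((nbhd (delAt G w) X₂).card : ℤ) ≤ (nbhd G X₀).card := by
        exact_mod_cast Finset.card_le_card hnb
      have := gdiff_le_critDiff (delAt G w) X₂
      rw [← hXc]
      unfold gdiff at this ⊢
      omega

end pendant
end S2

section S3
open SimpleGraph Walk
variable {V : Type*} {G : SimpleGraph V} [Fintype V] [DecidableEq V]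

lemma eq_getVert_one_of_edge_start {x y z : V} (p : G.Walk x y) (hp : p.IsPath)
    (h : s(x, z) ∈ p.edges) : z = p.getVert 1 := by
  cases p with
  | nil => simp at h
  | cons hadj q =>
    rw [Walk.edges_cons, List.mem_cons] at h
    rcases h with h | h
    · have := Sym2.congr_right.1 h
      rw [Walk.getVert_cons_succ, Walk.getVert_zero]
      exact this
    · exfalso
      have hx : x ∈ q.support := Walk.fst_mem_support_of_mem_edges q h
      rw [Walk.cons_isPath_iff] at hp
      exact hp.2 hx

lemma leaf_of_maximal_path (hac : G.IsAcyclic) {x y : V} (p : G.Walk x y) (hp : p.IsPath)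
    (hmax : ∀ z, G.Adj x z → z ∈ p.support) : ∀ z, G.Adj x z → z = p.getVert 1 := by
  intro z hz
  have hzs : z ∈ p.support := hmax z hz
  by_cases he : s(x, z) ∈ p.edges
  · exact eq_getVert_one_of_edge_start p hp he
  · exfalso
    set q := p.takeUntil z hzs with hq
    have hqp : q.IsPath := hp.takeUntil hzs
    have hqe : s(x, z) ∉ q.reverse.edges := by
      rw [Walk.edges_reverse, List.mem_reverse]
      intro hmem
      exact he (Walk.edges_takeUntil_subset p hzs hmem)
    have hcyc : (Walk.cons hz q.reverse).IsCycle := by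
      rw [Walk.cons_isCycle_iff]
      exact ⟨hqp.reverse, hqe⟩
    exact hac _ hcyc

lemma exists_two_leaf_path (hac : G.IsAcyclic) {a b : V} (hab : G.Adj a b) :
    ∃ (x y : V) (p : G.Walk x y), p.IsPath ∧ 0 < p.length ∧
      (∀ z, G.Adj x z → z = p.getVert 1) ∧
      (∀ z, G.Adj y z → z = p.reverse.getVert 1) := by
  classical
  set N := Fintype.card V with hN
  set P : ℕ → Prop := fun n => ∃ (x y : V) (p : G.Walk x y), p.IsPath ∧ p.length = n with hP
  have hP1 : P 1 := ⟨a, b, Walk.cons hab Walk.nil, by simp [Walk.cons_isPath_iff, hab.ne], rfl⟩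
  have hbound : ∀ n, P n → n < N := by
    rintro n ⟨x, y, p, hp, rfl⟩
    exact hp.length_lt
  have h1N : 1 ≤ N := le_of_lt (hbound 1 hP1)
  set L := Nat.findGreatest P N with hL
  have hPL : P L := Nat.findGreatest_spec h1N hP1
  have hL1 : 1 ≤ L := Nat.le_findGreatest h1N hP1
  have hLN : L < N := hbound L hPL
  have hmaxL : ¬ P (L + 1) := Nat.findGreatest_is_greatest (n := N) (by rw [← hL]; omega) (by omega)
  obtain ⟨x, y, p, hp, hlen⟩ := hPL
  have hext : ∀ (c d : V) (q : G.Walk c d), q.IsPath → q.length = L →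
      ∀ z, G.Adj c z → z ∈ q.support := by
    intro c d q hq hql z hz
    by_contra hns
    exact hmaxL ⟨z, d, Walk.cons hz.symm q, (Walk.cons_isPath_iff _ _).2 ⟨hq, hns⟩, by
      simp [hql]⟩
  refine ⟨x, y, p, hp, by omega, ?_, ?_⟩
  · exact leaf_of_maximal_path hac p hp (hext x y p hp hlen)
  · exact leaf_of_maximal_path hac p.reverse hp.reverse
      (hext y x p.reverse hp.reverse (by simp [hlen]))

end S3

section S4
open SimpleGraph Walk
variable {V : Type*} [Fintype V] [DecidableEq V]

lemma cycle_transfer {H G : SimpleGraph V} (hle : H ≤ G) {a : V} (c : H.Walk a a)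
    (hc : c.IsCycle) : ∃ c' : G.Walk a a, c'.IsCycle ∧ c'.edges = c.edges := by
  have hsub : ∀ e ∈ c.edges, e ∈ G.edgeSet := fun e he =>
    SimpleGraph.edgeSet_mono hle (c.edges_subset_edgeSet he)
  exact ⟨c.transfer G hsub, hc.transfer hsub, c.edges_transfer hsub⟩

lemma isAcyclic_mono {H G : SimpleGraph V} (hle : H ≤ G) (hac : G.IsAcyclic) :
    H.IsAcyclic := by
  intro a c hc
  obtain ⟨c', hc', -⟩ := cycle_transfer hle c hc
  exact hac c' hc'

lemma delAt_edges_lt {G : SimpleGraph V} {v w : V} (hvw : G.Adj v w) :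
    (delAt G w).edgeSet.ncard < G.edgeSet.ncard := by
  apply Set.ncard_lt_ncard _ (Set.toFinite _)
  constructor
  · exact SimpleGraph.edgeSet_subset_edgeSet.2 delAt_le
  · intro hsub
    have h1 : s(v, w) ∈ G.edgeSet := hvw
    have h2 : s(v, w) ∉ (delAt G w).edgeSet := by
      rw [delAt, SimpleGraph.edgeSet_deleteEdges]
      rintro ⟨-, h⟩
      exact h (Sym2.mem_mk_right v w)
    exact h2 (hsub h1)

lemma alphaG_le_card {G : SimpleGraph V} : alphaG G ≤ Fintype.card V := by
  apply Finset.sup_le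
  intro I _
  exact le_trans (Finset.card_le_univ I) (le_of_eq Finset.card_univ)

lemma KE_of_no_edges {G : SimpleGraph V} (hnoedge : ∀ a b : V, ¬ G.Adj a b) :
    alphaG G + matchNum G = Fintype.card V := by
  have halpha : alphaG G = Fintype.card V := by
    apply le_antisymm alphaG_le_card
    have : IsIndep G Finset.univ := fun x _ y _ h => hnoedge x y h
    have h2 := indep_card_le_alphaG G this
    rwa [Finset.card_univ] at h2
  have hmu : matchNum G = 0 := by
    apply Nat.le_zero.1
    apply Finset.sup_le
    intro M hM
    rw [Finset.mem_filter] at hM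
    have : M = ∅ := by
      apply Finset.eq_empty_of_forall_notMem
      intro e he
      have := hM.2.1 he
      induction e using Sym2.ind with
      | _ a b => exact hnoedge a b this
    simp [this]
  omega

lemma forest_KE_aux : ∀ m (G : SimpleGraph V), G.edgeSet.ncard ≤ m → G.IsAcyclic →
    alphaG G + matchNum G = Fintype.card V := by
  intro m
  induction m with
  | zero =>
    intro G hm hac
    apply KE_of_no_edges
    intro a b hab
    have : G.edgeSet.Nonempty := ⟨s(a, b), hab⟩
    have := Set.ncard_pos (Set.toFinite _) |>.2 this
    omega
  | succ m ih =>
    intro G hm hac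
    by_cases hedge : ∃ a b : V, G.Adj a b
    · obtain ⟨a, b, hab⟩ := hedge
      obtain ⟨x, y, p, hp, hlen, hleafx, -⟩ := exists_two_leaf_path hac hab
      have hnnil : ¬ p.Nil := by
        rw [Walk.nil_iff_length_eq]; omega
      have hadjx : G.Adj x (p.getVert 1) := p.adj_snd hnnil
      set w := p.getVert 1
      have hIH := ih (delAt G w) (by have := delAt_edges_lt hadjx; omega)
        (isAcyclic_mono delAt_le hac)
      have h1 := alpha_pendant hadjx hleafx
      have h2 := matchNum_pendant hadjx hleafx
      omega
    · push_neg at hedge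
      exact KE_of_no_edges hedge

lemma forest_KE (G : SimpleGraph V) (hac : G.IsAcyclic) :
    alphaG G + matchNum G = Fintype.card V :=
  forest_KE_aux _ G (le_refl _) hac

end S4

section S5
open SimpleGraph Walk
variable {V : Type*} [Fintype V] [DecidableEq V] {G : SimpleGraph V}

lemma support_of_edge {s t : V} {p : G.Walk s t} {e : Sym2 V} (he : e ∈ p.edges) {x : V}
    (hx : x ∈ e) : x ∈ p.support := by
  induction e using Sym2.ind with
  | _ a b =>
    rcases Sym2.mem_iff.1 hx with rfl | rfl
    · exact p.fst_mem_support_of_mem_edges he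
    · exact p.snd_mem_support_of_mem_edges he

lemma start_mem_support_tail {u : V} (C : G.Walk u u) (h : ¬ C.Nil) :
    u ∈ C.support.tail := by
  have hlen : 0 < C.length := by
    rw [Walk.nil_iff_length_eq] at h; omega
  have h1 : C.support.tail ≠ [] := by
    intro hnil
    have h3 : C.support.tail.length = 0 := by rw [hnil]; rfl
    rw [List.length_tail, C.length_support] at h3
    omega
  have h2 : C.support.tail.getLast h1 = u := by
    rw [List.getLast_tail, C.getLast_support]
  have h4 := List.getLast_mem h1
  rwa [h2] at h4

lemma mem_support_tail_of_mem_support {u : V} (C : G.Walk u u) (h : ¬ C.Nil) {w : V}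
    (hw : w ∈ C.support) : w ∈ C.support.tail := by
  rw [Walk.support_eq_cons, List.mem_cons] at hw
  rcases hw with rfl | hw
  · exact start_mem_support_tail C h
  · exact hw

lemma exists_edge_of_mem_support {u : V} (C : G.Walk u u) (h : ¬ C.Nil) {w : V}
    (hw : w ∈ C.support) : ∃ e ∈ C.edges, w ∈ e := by
  have hw' : w ∈ C.support.tail := mem_support_tail_of_mem_support C h hw
  rw [← C.map_snd_darts, List.mem_map] at hw'
  obtain ⟨d, hd, hds⟩ := hw'
  refine ⟨d.edge, List.mem_map_of_mem hd, ?_⟩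
  rw [← hds]
  exact Sym2.mem_mk_right _ _

lemma cycle_succ_inj {u : V} (C : G.Walk u u) (hC : C.IsCycle) :
    ∃ f : V → V, (∀ a ∈ C.support, G.Adj a (f a)) ∧
      (∀ a ∈ C.support, ∀ b ∈ C.support, f a = f b → a = b) := by
  classical
  have hnnil : ¬ C.Nil := by
    have := hC.three_le_length
    rw [Walk.nil_iff_length_eq]; omega
  have hU : ∀ d₁ ∈ C.darts, ∀ d₂ ∈ C.darts, d₁.snd = d₂.snd → d₁ = d₂ := by
    have hnodup : (C.darts.map (fun d => d.snd)).Nodup := by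
      rw [C.map_snd_darts]
      exact hC.support_nodup
    exact fun d₁ h₁ d₂ h₂ he => List.inj_on_of_nodup_map hnodup h₁ h₂ he
  have hE : ∀ a ∈ C.support, ∃ d ∈ C.darts, d.fst = a := by
    intro a ha
    have ha' : a ∈ C.support.tail := mem_support_tail_of_mem_support C hnnil ha
    -- use predecessor dart's successor... we need fst; use dropLast instead
    have hfst := C.map_fst_darts
    -- a ∈ dropLast support or a = u handled via: support = dropLast ++ [u]
    have hsupp : C.support.dropLast ++ [u] = C.support := by
      have h1 : C.support ≠ [] := C.support_ne_nil
      have h4 := List.dropLast_append_getLast h1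
      rw [C.getLast_support] at h4
      exact h4
    have ha2 : a ∈ C.support.dropLast ∨ a = u := by
      have : a ∈ C.support.dropLast ++ [u] := by rw [hsupp]; exact ha
      rcases List.mem_append.1 this with h | h
      · exact Or.inl h
      · simp at h; exact Or.inr h
    rcases ha2 with h | rfl
    · rw [← hfst] at h
      obtain ⟨d, hd, hda⟩ := List.mem_map.1 h
      exact ⟨d, hd, hda⟩
    · cases C with
      | nil => simp at hnnil
      | cons h q => exact ⟨_, by rw [Walk.darts_cons]; exact List.mem_cons_self, rfl⟩
  set f : V → V := fun a => if h : ∃ d ∈ C.darts, d.fst = a then h.choose.snd else a with hf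
  refine ⟨f, ?_, ?_⟩
  · intro a ha
    obtain ⟨d, hd, hda⟩ := hE a ha
    have hex : ∃ d ∈ C.darts, d.fst = a := ⟨d, hd, hda⟩
    have hch := hex.choose_spec
    have hthis : f a = hex.choose.snd := by rw [hf]; exact dif_pos hex
    have hadj := hex.choose.adj
    rw [hch.2] at hadj
    rw [hthis]
    exact hadj
  · intro a ha b hb hab
    obtain ⟨da, hda, hdaa⟩ := hE a ha
    obtain ⟨db, hdb, hdbb⟩ := hE b hb
    have hexa : ∃ d ∈ C.darts, d.fst = a := ⟨da, hda, hdaa⟩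
    have hexb : ∃ d ∈ C.darts, d.fst = b := ⟨db, hdb, hdbb⟩
    have hfa : f a = hexa.choose.snd := by rw [hf]; exact dif_pos hexa
    have hfb : f b = hexb.choose.snd := by rw [hf]; exact dif_pos hexb
    have heq : hexa.choose = hexb.choose :=
      hU _ hexa.choose_spec.1 _ hexb.choose_spec.1 (by rw [← hfa, ← hfb, hab])
    rw [← hexa.choose_spec.2, ← hexb.choose_spec.2, heq]

lemma path_matching : ∀ (n : ℕ) {a b : V} (p : G.Walk a b), p.length = n → p.IsPath →
    ∃ M : Finset (Sym2 V), IsMatchingF G M ∧ M.card = (n + 1) / 2 ∧ ∀ e ∈ M, e ∈ p.edges := by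
  intro n
  induction n using Nat.strong_induction_on with
  | _ n ih =>
    intro a b p hlen hp
    cases p with
    | nil =>
      refine ⟨∅, ⟨by simp, by simp⟩, ?_, by simp⟩
      simp only [Walk.length_nil] at hlen
      rw [Finset.card_empty]
      omega
    | cons h q =>
      cases q with
      | nil =>
        refine ⟨{s(a, b)}, ⟨?_, ?_⟩, ?_, ?_⟩
        · intro e he
          simp only [Finset.coe_singleton, Set.mem_singleton_iff] at he
          subst he; exact h
        · intro e₁ h₁ e₂ h₂ hne
          rw [Finset.mem_singleton] at h₁ h₂
          exact absurd (h₁.trans h₂.symm) hne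
        · simp only [Walk.length_cons, Walk.length_nil] at hlen
          rw [Finset.card_singleton]
          omega
        · intro e he; rw [Finset.mem_singleton] at he; subst he; simp
      | cons h₂ r =>
        rename_i c d
        rename' h => hac, h₂ => hcd
        have hlen' : r.length + 2 = n := by simpa using hlen
        rw [Walk.cons_isPath_iff] at hp
        obtain ⟨hp1, hanotin⟩ := hp
        rw [Walk.cons_isPath_iff] at hp1
        obtain ⟨hr, hcnotin⟩ := hp1
        obtain ⟨M', hM', hcard', hedges'⟩ := ih r.length (by omega) r rfl hr
        have h₂ := hcd
        have hanotr : a ∉ r.support := by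
          rw [Walk.support_cons] at hanotin
          exact fun hh => hanotin (List.mem_cons_of_mem _ hh)
        have hnotin : ∀ e ∈ M', a ∉ e ∧ c ∉ e := by
          intro e he
          constructor
          · intro hx; exact hanotr (support_of_edge (hedges' e he) hx)
          · intro hx; exact hcnotin (support_of_edge (hedges' e he) hx)
        have hnew : s(a, c) ∉ M' := fun hmem => (hnotin _ hmem).1 (Sym2.mem_mk_left _ _)
        refine ⟨insert s(a, c) M', ⟨?_, ?_⟩, ?_, ?_⟩
        · intro e he
          simp only [Finset.coe_insert, Set.mem_insert_iff] at he
          rcases he with rfl | he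
          · exact hac
          · exact hM'.1 he
        · intro e₁ h₁ e₂ h₂ hne x hx
          rcases Finset.mem_insert.1 h₁ with rfl | h₁'
          · rcases Finset.mem_insert.1 h₂ with rfl | h₂'
            · exact absurd rfl hne
            · rcases Sym2.mem_iff.1 hx with rfl | rfl
              · exact (hnotin _ h₂').1
              · exact (hnotin _ h₂').2
          · rcases Finset.mem_insert.1 h₂ with rfl | h₂'
            · intro hx2
              rcases Sym2.mem_iff.1 hx2 with rfl | rfl
              · exact (hnotin _ h₁').1 hx
              · exact (hnotin _ h₁').2 hx
            · exact hM'.2 e₁ h₁' e₂ h₂' hne x hx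
        · rw [Finset.card_insert_of_notMem hnew, hcard']
          omega
        · intro e he
          rcases Finset.mem_insert.1 he with rfl | he'
          · simp
          · rw [Walk.edges_cons, Walk.edges_cons]
            exact List.mem_cons_of_mem _ (List.mem_cons_of_mem _ (hedges' e he'))

lemma path_indep : ∀ (n : ℕ) {a b : V} (p : G.Walk a b), p.length = n → p.IsPath →
    ∃ I : Finset V, (∀ x ∈ I, x ∈ p.support) ∧ a ∉ I ∧ I.card = (n + 1) / 2 ∧
      ∀ x ∈ I, ∀ y ∈ I, s(x, y) ∉ p.edges := by
  intro n
  induction n using Nat.strong_induction_on with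
  | _ n ih =>
    intro a b p hlen hp
    cases p with
    | nil =>
      refine ⟨∅, by simp, by simp, ?_, by simp⟩
      simp only [Walk.length_nil] at hlen
      rw [Finset.card_empty]
      omega
    | cons h q =>
      cases q with
      | nil =>
        refine ⟨{b}, by simp, ?_, ?_, ?_⟩
        · rw [Finset.mem_singleton]; exact h.ne
        · simp only [Walk.length_cons, Walk.length_nil] at hlen
          rw [Finset.card_singleton]
          omega
        · intro x hx y hy
          rw [Finset.mem_singleton] at hx hy
          subst hx; subst hy
          simp only [Walk.edges_cons, Walk.edges_nil, List.mem_singleton]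
          intro hh
          rw [Sym2.eq_iff] at hh
          rcases hh with ⟨rfl, -⟩ | ⟨h1, h2⟩
          · exact h.ne rfl
          · exact h.ne h2.symm
      | cons h₂ r =>
        rename_i c d
        rename' h => hac, h₂ => hcd
        have hlen' : r.length + 2 = n := by simpa using hlen
        rw [Walk.cons_isPath_iff] at hp
        obtain ⟨hp1, hanotin⟩ := hp
        rw [Walk.cons_isPath_iff] at hp1
        obtain ⟨hr, hcnotin⟩ := hp1
        obtain ⟨I', hsub', hdni', hcard', hind'⟩ := ih r.length (by omega) r rfl hr
        have h₂ := hcd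
        have hanotr : a ∉ r.support := by
          rw [Walk.support_cons] at hanotin
          exact fun hh => hanotin (List.mem_cons_of_mem _ hh)
        have hcni : c ∉ I' := fun hh => hcnotin (hsub' c hh)
        have hani : a ∉ I' := fun hh => hanotr (hsub' a hh)
        have hanotI : a ∉ insert c I' := by
          intro hx
          rcases Finset.mem_insert.1 hx with h3 | h3
          · exact hac.ne h3
          · exact hani h3
        have hdnotI : d ∉ insert c I' := by
          intro hh
          rcases Finset.mem_insert.1 hh with h3 | h3
          · exact hcd.ne h3.symm
          · exact hdni' h3
        refine ⟨insert c I', ?_, hanotI, ?_, ?_⟩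
        · intro x hx
          rcases Finset.mem_insert.1 hx with rfl | hx'
          · rw [Walk.support_cons]
            exact List.mem_cons_of_mem _ (Walk.start_mem_support _)
          · rw [Walk.support_cons, Walk.support_cons]
            exact List.mem_cons_of_mem _ (List.mem_cons_of_mem _ (hsub' x hx'))
        · rw [Finset.card_insert_of_notMem hcni, hcard']; omega
        · intro x hx y hy hmem
          rw [Walk.edges_cons, Walk.edges_cons, List.mem_cons, List.mem_cons] at hmem
          rcases hmem with hh | hh | hh
          · rw [Sym2.eq_iff] at hh
            rcases hh with ⟨rfl, -⟩ | ⟨-, rfl⟩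
            · exact hanotI hx
            · exact hanotI hy
          · rw [Sym2.eq_iff] at hh
            rcases hh with ⟨-, rfl⟩ | ⟨rfl, -⟩
            · exact hdnotI hy
            · exact hdnotI hx
          · have hxr : x ∈ I' := by
              rcases Finset.mem_insert.1 hx with rfl | h3
              · exact absurd (support_of_edge hh (Sym2.mem_mk_left _ _)) hcnotin
              · exact h3
            have hyr : y ∈ I' := by
              rcases Finset.mem_insert.1 hy with rfl | h3
              · exact absurd (support_of_edge hh (Sym2.mem_mk_right _ _)) hcnotin
              · exact h3
            exact hind' x hxr y hyr hh

lemma alpha_add_matchNum_le : alphaG G + matchNum G ≤ Fintype.card V := by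
  classical
  obtain ⟨I, hI, hIcard⟩ := exists_max_indep G
  obtain ⟨M, hM, hMcard⟩ := exists_max_matching G
  have hpick : ∀ e ∈ M, ∃ x, x ∈ e ∧ x ∉ I := by
    intro e he
    have hedge := hM.1 he
    induction e using Sym2.ind with
    | _ a b =>
      rw [SimpleGraph.mem_edgeSet] at hedge
      by_cases ha : a ∈ I
      · by_cases hb : b ∈ I
        · exact absurd hedge (hI a ha b hb)
        · exact ⟨b, Sym2.mem_mk_right _ _, hb⟩
      · exact ⟨a, Sym2.mem_mk_left _ _, ha⟩
  rcases M.eq_empty_or_nonempty with rfl | ⟨e₀, he₀⟩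
  · simp only [Finset.card_empty] at hMcard
    rw [← hMcard]
    simpa using alphaG_le_card
  · set v₀ := (hpick e₀ he₀).choose with hv₀
    set f : Sym2 V → V := fun e => if h : ∃ x, x ∈ e ∧ x ∉ I then h.choose else v₀ with hfdef
    have hfmem : ∀ e ∈ M, f e ∈ e ∧ f e ∉ I := by
      intro e he
      have hex := hpick e he
      have : f e = hex.choose := by rw [hfdef]; exact dif_pos hex
      rw [this]
      exact ⟨hex.choose_spec.1, hex.choose_spec.2⟩
    have hinj : M.card ≤ (Finset.univ \ I).card := by
      apply Finset.card_le_card_of_injOn f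
      · intro e he
        rw [Finset.mem_coe, Finset.mem_sdiff]
        exact ⟨Finset.mem_univ _, (hfmem e he).2⟩
      · intro e₁ h₁ e₂ h₂ hfe
        by_contra hne
        exact hM.2 e₁ h₁ e₂ h₂ hne (f e₁) (hfmem e₁ h₁).1 (hfe ▸ (hfmem e₂ h₂).1)
    have hIle : I.card ≤ Fintype.card V := by
      rw [← Finset.card_univ]; exact Finset.card_le_univ I
    have hsd : (Finset.univ \ I).card = Fintype.card V - I.card := by
      rw [Finset.card_sdiff_of_subset (Finset.subset_univ I), Finset.card_univ]
    omega

end S5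

section S6
open SimpleGraph Walk
variable {V : Type*} [Fintype V] [DecidableEq V]

lemma reachable_support {K : SimpleGraph V} {s t a b : V} (w : K.Walk s t)
    (ha : a ∈ w.support) (hb : b ∈ w.support) : K.Reachable a b :=
  Reachable.trans ⟨(w.takeUntil a ha).reverse⟩ ⟨w.takeUntil b hb⟩

lemma cycle_tail_path {G : SimpleGraph V} {u : V} (C : G.Walk u u) (hC : C.IsCycle) :
    ∃ (c : V) (q : G.Walk c u), q.IsPath ∧ q.length + 1 = C.length ∧
      (∀ e ∈ q.edges, e ∈ C.edges) ∧ (∀ z ∈ q.support, z ∈ C.support) ∧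
      (∀ x' y' : V, s(x', y') ∈ C.edges → s(x', y') ∉ q.edges →
        (x' = u ∧ y' = c) ∨ (x' = c ∧ y' = u)) := by
  cases C with
  | nil => exact absurd hC.three_le_length (by simp)
  | cons hfirst q =>
    rename_i c
    rw [SimpleGraph.Walk.cons_isCycle_iff] at hC
    refine ⟨c, q, hC.1, by simp, ?_, ?_, ?_⟩
    · intro e he; rw [Walk.edges_cons]; exact List.mem_cons_of_mem _ he
    · intro z hz; rw [Walk.support_cons]; exact List.mem_cons_of_mem _ hz
    · intro x' y' hmem hnot
      rw [Walk.edges_cons, List.mem_cons] at hmem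
      rcases hmem with hh | hh
      · rw [Sym2.eq_iff] at hh
        exact hh
      · exact absurd hh hnot

lemma base_case (G : SimpleGraph V) (u : V) (C : G.Walk u u) (hC : C.IsCycle)
    (huniq : ∀ (u' : V) (C' : G.Walk u' u'), C'.IsCycle →
      C'.edges.toFinset = C.edges.toFinset)
    (hnp : ∀ x z : V, G.Adj x z → ∃ z', G.Adj x z' ∧ z' ≠ z)
    (hnonKE : alphaG G + matchNum G ≠ Fintype.card V) :
    critDiff G = (alphaG G : ℤ) - (matchNum G : ℤ) := by
  classical
  have hCnnil : ¬ C.Nil := by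
    have := hC.three_le_length
    rw [Walk.nil_iff_length_eq]; omega
  -- Step 1: every edge of G is an edge of C
  have hEdges : ∀ a b : V, G.Adj a b → s(a, b) ∈ C.edges := by
    by_contra hcon
    push_neg at hcon
    obtain ⟨a, b, hab, hnotC⟩ := hcon
    set Gres := G.deleteEdges {e : Sym2 V | e ∈ C.edges} with hGres
    have hResAdj : ∀ x y : V, Gres.Adj x y ↔ G.Adj x y ∧ s(x, y) ∉ C.edges := by
      intro x y
      rw [hGres, SimpleGraph.deleteEdges_adj, Set.mem_setOf_eq]
    have hab' : Gres.Adj a b := (hResAdj a b).2 ⟨hab, hnotC⟩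
    have hResAcyc : Gres.IsAcyclic := by
      intro v c hc
      obtain ⟨c', hc', hedges⟩ := cycle_transfer (SimpleGraph.deleteEdges_le _) c hc
      have htf := huniq v c' hc'
      have hlenc := hc.three_le_length
      have : 0 < c.edges.length := by rw [Walk.length_edges]; omega
      obtain ⟨e₁, he₁⟩ := List.exists_mem_of_length_pos this
      have he₁G : e₁ ∈ Gres.edgeSet := c.edges_subset_edgeSet he₁
      have he₁notC : e₁ ∉ C.edges := by
        rw [hGres, SimpleGraph.edgeSet_deleteEdges] at he₁G
        exact he₁G.2
      apply he₁notC
      have : e₁ ∈ c'.edges := by rw [hedges]; exact he₁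
      have := List.mem_toFinset.2 this
      rw [htf] at this
      exact List.mem_toFinset.1 this
    obtain ⟨x, y, p, hpPath, hplen, hlx, hly⟩ := exists_two_leaf_path hResAcyc hab'
    have hpnnil : ¬ p.Nil := by rw [Walk.nil_iff_length_eq]; omega
    have hGresAdjImp : ∀ z₁ z₂ : V, z₁ ∉ C.support → G.Adj z₁ z₂ → Gres.Adj z₁ z₂ := by
      intro z₁ z₂ hz hadj
      refine (hResAdj z₁ z₂).2 ⟨hadj, fun hmem => hz ?_⟩
      exact C.fst_mem_support_of_mem_edges hmem
    have hxS : x ∈ C.support := by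
      by_contra hxS
      have hadj1 : Gres.Adj x (p.getVert 1) := p.adj_snd hpnnil
      obtain ⟨z', hz', hne⟩ := hnp x (p.getVert 1) ((hResAdj _ _).1 hadj1).1
      exact hne (hlx z' (hGresAdjImp x z' hxS hz'))
    have hyS : y ∈ C.support := by
      by_contra hyS
      have hrnnil : ¬ p.reverse.Nil := by
        rw [Walk.nil_iff_length_eq, Walk.length_reverse]; omega
      have hadj1 : Gres.Adj y (p.reverse.getVert 1) := p.reverse.adj_snd hrnnil
      obtain ⟨z', hz', hne⟩ := hnp y (p.reverse.getVert 1) ((hResAdj _ _).1 hadj1).1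
      exact hne (hly z' (hGresAdjImp y z' hyS hz'))
    -- destructure p
    cases p with
    | nil => simp at hplen
    | cons hfirst q =>
      rename_i c
      have he_notC : s(x, c) ∉ C.edges := ((hResAdj x c).1 hfirst).2
      have he_G : G.Adj x c := ((hResAdj x c).1 hfirst).1
      have he_not_q : s(x, c) ∉ q.edges := by
        have := hpPath.isTrail.edges_nodup
        rw [Walk.edges_cons] at this
        exact (List.nodup_cons.1 this).1
      set K := G.deleteEdges {s(x, c)} with hK
      have hKedge : ∀ f ∈ G.edgeSet, f ≠ s(x, c) → f ∈ K.edgeSet := by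
        intro f hf hne
        rw [hK, SimpleGraph.edgeSet_deleteEdges]
        exact ⟨hf, hne⟩
      have hCK : ∀ f ∈ C.edges, f ∈ K.edgeSet := by
        intro f hf
        exact hKedge f (C.edges_subset_edgeSet hf) (fun hh => he_notC (hh ▸ hf))
      set CK := C.transfer K hCK with hCKdef
      have hxCK : x ∈ CK.support := by rw [hCKdef, Walk.support_transfer]; exact hxS
      have hyCK : y ∈ CK.support := by rw [hCKdef, Walk.support_transfer]; exact hyS
      have hReachXY : K.Reachable x y := reachable_support CK hxCK hyCK
      have hqK : ∀ f ∈ q.edges, f ∈ K.edgeSet := by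
        intro f hf
        refine hKedge f (SimpleGraph.edgeSet_mono (SimpleGraph.deleteEdges_le _)
          (q.edges_subset_edgeSet hf)) ?_
        intro hh
        exact he_not_q (hh ▸ hf)
      have hReachYc : K.Reachable y c := ⟨(q.transfer K hqK).reverse⟩
      have hReach : K.Reachable x c := hReachXY.trans hReachYc
      have hmain := SimpleGraph.adj_and_reachable_delete_edges_iff_exists_cycle.mp
        ⟨he_G, hReach⟩
      obtain ⟨u', cyc, hcyc, hecyc⟩ := hmain
      have := huniq u' cyc hcyc
      apply he_notC
      have h5 := List.mem_toFinset.2 hecyc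
      rw [this] at h5
      exact List.mem_toFinset.1 h5
  -- Step 2: the support finset
  set S := C.support.toFinset with hSdef
  set L := C.length with hLdef
  set n := Fintype.card V with hndef
  have hmemS : ∀ a b : V, G.Adj a b → a ∈ S ∧ b ∈ S := by
    intro a b hab
    have := hEdges a b hab
    exact ⟨List.mem_toFinset.2 (C.fst_mem_support_of_mem_edges this),
      List.mem_toFinset.2 (C.snd_mem_support_of_mem_edges this)⟩
  have hScard : S.card = L := by
    have hmem : u ∈ C.support.tail := start_mem_support_tail C hCnnil
    have h1 : C.support = u :: C.support.tail := by
      rw [← Walk.support_eq_cons]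
    have h2 : S = C.support.tail.toFinset := by
      rw [hSdef]
      conv_lhs => rw [h1]
      rw [List.toFinset_cons]
      exact Finset.insert_eq_self.2 (List.mem_toFinset.2 hmem)
    rw [h2, List.toFinset_card_of_nodup hC.support_nodup]
    have h3 := C.length_support
    rw [List.length_tail]
    omega
  have hLn : L ≤ n := by
    rw [← hScard, hndef, ← Finset.card_univ]
    exact Finset.card_le_univ S
  -- Step 3: critDiff = n - L
  have hcrit : critDiff G = (n : ℤ) - (L : ℤ) := by
    apply le_antisymm
    · -- upper bound
      apply Finset.sup'_le
      intro X hX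
      obtain ⟨f, hfadj, hfinj⟩ := cycle_succ_inj C hC
      have h1 : (X ∩ S).card ≤ (nbhd G X).card := by
        apply Finset.card_le_card_of_injOn f
        · intro a ha
          rw [Finset.mem_coe, Finset.mem_inter] at ha
          rw [Finset.mem_coe, mem_nbhd]
          exact ⟨a, ha.1, hfadj a (List.mem_toFinset.1 (hSdef ▸ ha.2))⟩
        · intro a ha b hb hab
          rw [Finset.coe_inter, Set.mem_inter_iff] at ha hb
          exact hfinj a (List.mem_toFinset.1 (by exact_mod_cast ha.2)) b
            (List.mem_toFinset.1 (by exact_mod_cast hb.2)) hab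
      have h2 := Finset.card_inter_add_card_sdiff X S
      have h3 : (X \ S).card ≤ n - L := by
        calc (X \ S).card ≤ (Finset.univ \ S).card :=
              Finset.card_le_card (fun z hz => by
                rw [Finset.mem_sdiff] at hz ⊢
                exact ⟨Finset.mem_univ _, hz.2⟩)
          _ = n - L := by rw [Finset.card_sdiff_of_subset (Finset.subset_univ S), hScard,
                Finset.card_univ]
      unfold gdiff
      push_cast
      omega
    · -- lower bound via X = univ \ S
      have h0 : nbhd G (Finset.univ \ S) = ∅ := by
        apply Finset.eq_empty_of_forall_notMem
        intro z hz
        rw [mem_nbhd] at hz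
        obtain ⟨x, hx, hadj⟩ := hz
        rw [Finset.mem_sdiff] at hx
        exact hx.2 (hmemS x z hadj).1
      have h1 := gdiff_le_critDiff G (Finset.univ \ S)
      unfold gdiff at h1
      rw [h0, Finset.card_sdiff_of_subset (Finset.subset_univ S), hScard, Finset.card_univ] at h1
      simp only [Finset.card_empty, Nat.cast_zero, sub_zero] at h1
      calc (n : ℤ) - L = ((n - L : ℕ) : ℤ) := by push_cast; omega
        _ ≤ critDiff G := h1
  -- Step 4: numeric facts
  have hMu2 : 2 * matchNum G ≤ L := by
    obtain ⟨M, hM, hMcard⟩ := exists_max_matching G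
    set T := M.biUnion (fun e => Finset.univ.filter (fun z => z ∈ e)) with hT
    have hdisj : ∀ e₁ ∈ M, ∀ e₂ ∈ M, e₁ ≠ e₂ →
        Disjoint (Finset.univ.filter (fun z => z ∈ e₁))
          (Finset.univ.filter (fun z => z ∈ e₂)) := by
      intro e₁ h₁ e₂ h₂ hne
      rw [Finset.disjoint_left]
      intro z hz1 hz2
      rw [Finset.mem_filter] at hz1 hz2
      exact hM.2 e₁ h₁ e₂ h₂ hne z hz1.2 hz2.2
    have heach : ∀ e ∈ M, (Finset.univ.filter (fun z => z ∈ e)).card = 2 := by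
      intro e he
      have hedge := hM.1 he
      induction e using Sym2.ind with
      | _ a' b' =>
        rw [SimpleGraph.mem_edgeSet] at hedge
        have : Finset.univ.filter (fun z => z ∈ s(a', b')) = {a', b'} := by
          ext z
          simp [Sym2.mem_iff, Finset.mem_insert]
        rw [this, Finset.card_insert_of_notMem (by
          rw [Finset.mem_singleton]; exact hedge.ne), Finset.card_singleton]
    have hTcard : T.card = 2 * M.card := by
      rw [hT, Finset.card_biUnion hdisj, Finset.sum_congr rfl heach, Finset.sum_const,
        smul_eq_mul, mul_comm]
    have hTS : T ⊆ S := by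
      intro z hz
      rw [hT, Finset.mem_biUnion] at hz
      obtain ⟨e, he, hze⟩ := hz
      rw [Finset.mem_filter] at hze
      have hedge := hM.1 he
      revert hze
      induction e using Sym2.ind with
      | _ a' b' =>
        rw [SimpleGraph.mem_edgeSet] at hedge
        rintro ⟨-, hze⟩
        rcases Sym2.mem_iff.1 hze with rfl | rfl
        · exact (hmemS _ _ hedge).1
        · exact (hmemS _ _ hedge).2
    have := Finset.card_le_card hTS
    rw [hTcard, hScard] at this
    omega
  -- destructure the cycle to get a path of length L - 1
  obtain ⟨c, q, hqpath, hqlen, hqedges, hqsupp, hsplit⟩ := cycle_tail_path C hC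
  have hMuk : L / 2 ≤ matchNum G := by
    obtain ⟨M, hMmatch, hMcard, -⟩ := path_matching q.length q rfl hqpath
    have h1 := matching_card_le_matchNum G hMmatch
    rw [hMcard] at h1
    have : q.length + 1 = L := hqlen
    omega
  have hAlpha_ge : (n - L) + L / 2 ≤ alphaG G := by
    obtain ⟨I', hsubI, hcni, hcardI, hindI⟩ := path_indep q.length q rfl hqpath
    have hI'S : ∀ x ∈ I', x ∈ S := fun x hx =>
      List.mem_toFinset.2 (hqsupp x (hsubI x hx))
    have hdisj : Disjoint I' (Finset.univ \ S) := by
      rw [Finset.disjoint_left]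
      intro x hx hx2
      rw [Finset.mem_sdiff] at hx2
      exact hx2.2 (hI'S x hx)
    have hindep : IsIndep G (I' ∪ (Finset.univ \ S)) := by
      intro x hx y hy hadj
      have hxy := hmemS x y hadj
      have hxI : x ∈ I' := by
        rcases Finset.mem_union.1 hx with h | h
        · exact h
        · rw [Finset.mem_sdiff] at h; exact absurd hxy.1 h.2
      have hyI : y ∈ I' := by
        rcases Finset.mem_union.1 hy with h | h
        · exact h
        · rw [Finset.mem_sdiff] at h; exact absurd hxy.2 h.2
      have hce := hEdges x y hadj
      by_cases hq : s(x, y) ∈ q.edges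
      · exact hindI x hxI y hyI hq
      · rcases hsplit x y hce hq with ⟨-, rfl⟩ | ⟨rfl, -⟩
        · exact hcni hyI
        · exact hcni hxI
    have hcard : (I' ∪ (Finset.univ \ S)).card = L / 2 + (n - L) := by
      rw [Finset.card_union_of_disjoint hdisj, hcardI,
        Finset.card_sdiff_of_subset (Finset.subset_univ S), hScard, Finset.card_univ]
      have : q.length + 1 = L := hqlen
      omega
    have := indep_card_le_alphaG G hindep
    omega
  have hL3 : 3 ≤ L := hC.three_le_length
  have hGallai := alpha_add_matchNum_le (G := G)
  rw [hcrit]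
  omega

end S6

section S7
open SimpleGraph Walk
variable {V : Type*} [Fintype V] [DecidableEq V]

lemma key_aux : ∀ (m : ℕ) (G : SimpleGraph V), G.edgeSet.ncard ≤ m →
    ∀ (u : V) (C : G.Walk u u), C.IsCycle →
    (∀ (u' : V) (C' : G.Walk u' u'), C'.IsCycle → C'.edges.toFinset = C.edges.toFinset) →
    alphaG G + matchNum G ≠ Fintype.card V →
    critDiff G = (alphaG G : ℤ) - (matchNum G : ℤ) := by
  intro m
  induction m with
  | zero =>
    intro G hm u C hC huniq hnonKE
    exfalso
    have h1 := hC.three_le_length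
    have h2 : 0 < C.edges.length := by rw [Walk.length_edges]; omega
    obtain ⟨e, he⟩ := List.exists_mem_of_length_pos h2
    have : e ∈ G.edgeSet := C.edges_subset_edgeSet he
    have := Set.ncard_pos (Set.toFinite _) |>.2 ⟨e, this⟩
    omega
  | succ m ih =>
    intro G hm u C hC huniq hnonKE
    have hCnnil : ¬ C.Nil := by
      have := hC.three_le_length
      rw [Walk.nil_iff_length_eq]; omega
    by_cases hpend : ∃ v w, G.Adj v w ∧ ∀ z, G.Adj v z → z = w
    · obtain ⟨v, w, hvw, hv⟩ := hpend
      have h1 := alpha_pendant hvw hv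
      have h2 := matchNum_pendant hvw hv
      by_cases hwC : w ∈ C.support
      · -- w on the cycle: deleting its edges yields a forest, contradiction with non-KE
        exfalso
        have hacyc : (delAt G w).IsAcyclic := by
          intro a c hc
          obtain ⟨c', hc', hedges⟩ := cycle_transfer delAt_le c hc
          have htf := huniq a c' hc'
          obtain ⟨e, heC, hwe⟩ := exists_edge_of_mem_support C hCnnil hwC
          have he' : e ∈ c.edges := by
            rw [← hedges]
            have := List.mem_toFinset.2 heC
            rw [← htf] at this
            exact List.mem_toFinset.1 this
          have hsub := c.edges_subset_edgeSet he'
          rw [delAt, SimpleGraph.edgeSet_deleteEdges] at hsub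
          exact hsub.2 hwe
        have hKE := forest_KE (delAt G w) hacyc
        omega
      · -- w off the cycle: recurse
        have hCedges : ∀ e ∈ C.edges, e ∈ (delAt G w).edgeSet := by
          intro e he
          rw [delAt, SimpleGraph.edgeSet_deleteEdges]
          refine ⟨C.edges_subset_edgeSet he, ?_⟩
          intro hwe
          exact hwC (support_of_edge he hwe)
        set C' := C.transfer (delAt G w) hCedges with hC'def
        have hC' : C'.IsCycle := hC.transfer hCedges
        have huniq' : ∀ (u' : V) (C'' : (delAt G w).Walk u' u'), C''.IsCycle →
            C''.edges.toFinset = C'.edges.toFinset := by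
          intro u' C'' hC''
          obtain ⟨c', hc', hedges⟩ := cycle_transfer delAt_le C'' hC''
          have htf := huniq u' c' hc'
          rw [hedges] at htf
          rw [htf, hC'def, C.edges_transfer hCedges]
        have hnonKE' : alphaG (delAt G w) + matchNum (delAt G w) ≠ Fintype.card V := by
          omega
        have hm' : (delAt G w).edgeSet.ncard ≤ m := by
          have := delAt_edges_lt hvw
          omega
        have hrec := ih (delAt G w) hm' u C' hC' huniq' hnonKE'
        have hcp := critDiff_pendant hvw hv
        rw [hcp] at hrec
        omega
    · push_neg at hpend
      exact base_case G u C hC huniq hpend hnonKE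

end S7


/-- for a unicyclic non-König-Egerváry graph, `d_c(G) = α(G) - μ(G)`. -/
theorem stmt15 {V : Type*} (G : SimpleGraph V) [Fintype V] [DecidableEq V] [DecidableRel G.Adj]
    (u : V) (C : G.Walk u u) (hC : C.IsCycle)
    (huniq : ∀ (u' : V) (C' : G.Walk u' u'), C'.IsCycle →
      C'.edges.toFinset = C.edges.toFinset)
    (hnonKE : alphaG G + matchNum G ≠ Fintype.card V) :
    critDiff G = (alphaG G : ℤ) - (matchNum G : ℤ) :=
  key_aux G.edgeSet.ncard G le_rfl u C hC huniq hnonKE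
end

section
/- Let G be a disjoint union of factor-critical graphs, each with more than one vertex. Then every nonempty independent set S of G satisfies d(S) = |S| − |N(S)| < 0. -/
open Classical Finset

/-- in a disjoint union of factor-critical graphs of order > 1,
every nonempty independent set has negative difference. -/
theorem stmt16 {V : Type*} (G : SimpleGraph V) [Fintype V] [DecidableEq V] [DecidableRel G.Adj]
    (hbig : ∀ v : V, ∃ w : V, w ≠ v ∧ G.Reachable v w)
    (hfc : ∀ v : V, ∃ M : SimpleGraph.Subgraph
        (SimpleGraph.induce {w : V | G.Reachable v w ∧ w ≠ v} G), M.IsPerfectMatching)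
    (S : Finset V) (hS : S.Nonempty) (hind : IsIndep G S) :
    gdiff G S < 0 := by
  classical
  -- every vertex has a neighbor
  have hnb' : ∀ v : V, ∃ w, G.Adj v w := by
    intro v
    obtain ⟨w, hw, hr⟩ := hbig v
    obtain ⟨p⟩ := hr
    cases p with
    | nil => exact absurd rfl hw
    | cons h _ => exact ⟨_, h⟩
  choose nb hnb using hnb'
  set P : G.ConnectedComponent → Prop :=
    fun c => ∃ s, s ∈ S ∧ G.connectedComponentMk s = c with hPdef
  -- deleted vertex per component
  set del : G.ConnectedComponent → V :=
    fun c => if h : P c then nb h.choose else hS.choose with hdeldef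
  have hdel : ∀ (c : G.ConnectedComponent) (h : P c),
      del c ∉ S ∧ del c ∈ nbhd G S ∧ G.connectedComponentMk (del c) = c ∧
        ∀ t ∈ S, G.connectedComponentMk t = c → G.Reachable (del c) t := by
    intro c h
    have hs0 := h.choose_spec
    set s0 := h.choose with hs0def
    have hadj : G.Adj s0 (nb s0) := hnb s0
    have hdc : del c = nb s0 := by simp [hdeldef, dif_pos h]; rfl
    have hnot : del c ∉ S := by
      rw [hdc]; exact fun hmem => hind s0 hs0.1 _ hmem hadj
    have hreach : ∀ t ∈ S, G.connectedComponentMk t = c → G.Reachable (del c) t := by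
      intro t ht hct
      have h1 : G.Reachable s0 t :=
        (SimpleGraph.ConnectedComponent.eq).1 (hs0.2.trans hct.symm)
      rw [hdc]
      exact (hadj.symm.reachable).trans h1
    refine ⟨hnot, ?_, ?_, hreach⟩
    · rw [hdc]
      simp only [nbhd, mem_filter, mem_univ, true_and]
      exact ⟨s0, hs0.1, hadj⟩
    · rw [hdc, ← hs0.2]
      exact (SimpleGraph.ConnectedComponent.eq).2 hadj.symm.reachable
  have hPmk : ∀ t ∈ S, P (G.connectedComponentMk t) := fun t ht => ⟨t, ht, rfl⟩
  -- membership of S-vertices in the deleted component sets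
  have hmem : ∀ (c : G.ConnectedComponent) (t : V), t ∈ S → G.connectedComponentMk t = c →
      (G.Reachable (del c) t ∧ t ≠ del c) := by
    intro c t ht hct
    have h : P c := ⟨t, ht, hct⟩
    obtain ⟨hnotS, _, _, hreach⟩ := hdel c h
    exact ⟨hreach t ht hct, fun he => hnotS (he ▸ ht)⟩
  -- matching partner
  have hpart : ∀ (c : G.ConnectedComponent) (t : V) (ht : t ∈ S)
      (hct : G.connectedComponentMk t = c),
      ∃ u : V, ∃ hu : G.Reachable (del c) u ∧ u ≠ del c,
        ((hfc (del c)).choose).Adj ⟨t, hmem c t ht hct⟩ ⟨u, hu⟩ := by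
    intro c t ht hct
    have hM := (hfc (del c)).choose_spec
    have hv : (⟨t, hmem c t ht hct⟩ : {w : V // G.Reachable (del c) w ∧ w ≠ del c}) ∈
        ((hfc (del c)).choose).verts := hM.2 _
    obtain ⟨w, hw, _⟩ := hM.1 hv
    exact ⟨w.1, w.2, hw⟩
  choose pf hpf hMadj using hpart
  -- pf result only depends on the component
  have hpfcong : ∀ (c1 c2 : G.ConnectedComponent) (h : c1 = c2) (t : V) (ht : t ∈ S)
      (p1 : G.connectedComponentMk t = c1) (p2 : G.connectedComponentMk t = c2),
      pf c1 t ht p1 = pf c2 t ht p2 := by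
    rintro c1 c2 rfl t ht p1 p2; rfl
  set f : V → V := fun t =>
    if ht : t ∈ S then pf (G.connectedComponentMk t) t ht rfl else t with hfdef
  have hfS : ∀ t (ht : t ∈ S), f t = pf (G.connectedComponentMk t) t ht rfl := by
    intro t ht; simp [hfdef, dif_pos ht]
  -- basic adjacency fact
  have hadjf : ∀ (c : G.ConnectedComponent) (t : V) (ht : t ∈ S)
      (hct : G.connectedComponentMk t = c), G.Adj t (pf c t ht hct) := by
    intro c t ht hct
    have := ((hfc (del c)).choose).adj_sub (hMadj c t ht hct)
    exact this
  have hfnbhd : ∀ t ∈ S, f t ∈ nbhd G S := by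
    intro t ht
    rw [hfS t ht]
    simp only [nbhd, mem_filter, mem_univ, true_and]
    exact ⟨t, ht, hadjf _ t ht rfl⟩
  -- f preserves components
  have hfcomp : ∀ t (ht : t ∈ S), G.connectedComponentMk (f t) = G.connectedComponentMk t := by
    intro t ht
    rw [hfS t ht]
    exact (SimpleGraph.ConnectedComponent.eq).2 (hadjf _ t ht rfl).symm.reachable
  -- injectivity
  have hinj : Set.InjOn f ↑S := by
    intro t1 ht1 t2 ht2 hf
    simp only [Finset.mem_coe] at ht1 ht2
    have hc : G.connectedComponentMk t2 = G.connectedComponentMk t1 := by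
      rw [← hfcomp t1 ht1, ← hfcomp t2 ht2, hf]
    set c := G.connectedComponentMk t1 with hcdef
    have he2 : f t2 = pf c t2 ht2 hc := by
      rw [hfS t2 ht2]; exact hpfcong _ _ hc t2 ht2 rfl hc
    have he1 : f t1 = pf c t1 ht1 rfl := hfS t1 ht1
    have hu : pf c t1 ht1 rfl = pf c t2 ht2 hc := by rw [← he1, ← he2, hf]
    have a1 := hMadj c t1 ht1 rfl
    have a2 := hMadj c t2 ht2 hc
    set M := (hfc (del c)).choose with hMdef
    have hM := (hfc (del c)).choose_spec
    have hveq : (⟨pf c t1 ht1 rfl, hpf c t1 ht1 rfl⟩ :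
        {w : V // G.Reachable (del c) w ∧ w ≠ del c}) = ⟨pf c t2 ht2 hc, hpf c t2 ht2 hc⟩ :=
      Subtype.ext hu
    rw [hveq] at a1
    have hvert : (⟨pf c t2 ht2 hc, hpf c t2 ht2 hc⟩ :
        {w : V // G.Reachable (del c) w ∧ w ≠ del c}) ∈ M.verts := hM.2 _
    obtain ⟨w, _, huniq⟩ := hM.1 hvert
    have e1 := huniq _ a1.symm
    have e2 := huniq _ a2.symm
    have : (⟨t1, hmem c t1 ht1 rfl⟩ : {w : V // G.Reachable (del c) w ∧ w ≠ del c}) =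
        ⟨t2, hmem c t2 ht2 hc⟩ := e1.trans e2.symm
    exact congrArg Subtype.val this
  -- the missed vertex
  obtain ⟨s, hs⟩ := hS
  set c0 := G.connectedComponentMk s with hc0def
  have hPc0 : P c0 := ⟨s, hs, rfl⟩
  obtain ⟨hd0S, hd0nbhd, hd0c, _⟩ := hdel c0 hPc0
  have hmiss : ∀ t ∈ S, f t ≠ del c0 := by
    intro t ht
    by_cases hct : G.connectedComponentMk t = c0
    · rw [hfS t ht, hpfcong _ _ hct t ht rfl hct]
      exact (hpf c0 t ht hct).2
    · intro he
      apply hct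
      rw [← hfcomp t ht, he, hd0c]
  -- count
  have hsub : ∀ t ∈ S, f t ∈ (nbhd G S).erase (del c0) := by
    intro t ht
    exact Finset.mem_erase.2 ⟨hmiss t ht, hfnbhd t ht⟩
  have hcard : S.card ≤ ((nbhd G S).erase (del c0)).card :=
    Finset.card_le_card_of_injOn f hsub hinj
  have hlt : ((nbhd G S).erase (del c0)).card < (nbhd G S).card :=
    Finset.card_erase_lt_of_mem hd0nbhd
  have : S.card < (nbhd G S).card := lt_of_le_of_lt hcard hlt
  simp only [gdiff]
  omega
end

section
/- If I is a maximum independent set of a graph H containing a vertex w that is adjacent to all vertices of N(X) for an independent set X with the property that every proper subset Y ⊊ X has d(Y) < d(X) > 0, then in the bipartite auxiliary graph H_X (vertex set X ∪ N(X) ∪ {v,w}, edges of G between X and N(X), plus vw and all vx for x ∈ N(X)), every maximum independent set containing w equals X ∪ {w}. -/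
open Classical Finset

set_option maxHeartbeats 1600000

/-- in `H_X`, every maximum independent set containing `w` equals `X ∪ {w}`. -/
theorem stmt19 {V : Type*} (G : SimpleGraph V) [Fintype V] [DecidableRel G.Adj]
    (X : Finset V) (hind : IsIndep G X) (hpos : 0 < gdiff G X)
    (hmin : ∀ Y ⊂ X, gdiff G Y < gdiff G X)
    (I : Finset ({a : V // a ∈ X ∪ nbhd G X} ⊕ Bool))
    (hI : IsIndep (HX G X) I) (hImax : I.card = alphaG (HX G X))
    (hw : Sum.inr true ∈ I) :
    I = Xlift G X ∪ {Sum.inr true} := by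
    classical
  -- X is nonempty
  have hXne : X.Nonempty := by
    by_contra h
    rw [Finset.not_nonempty_iff_eq_empty] at h
    subst h
    have : nbhd G (∅ : Finset V) = ∅ := by
      ext v; simp [nbhd]
    simp [gdiff, this] at hpos
  obtain ⟨x0, hx0⟩ := hXne
  -- X and N(X) are disjoint
  have hdisj : ∀ a ∈ X, a ∉ nbhd G X := by
    intro a ha hn
    simp only [nbhd, Finset.mem_filter] at hn
    obtain ⟨-, x, hx, hadj⟩ := hn
    exact hind x hx a ha hadj
  set g : ({a : V // a ∈ X ∪ nbhd G X} ⊕ Bool) → V :=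
    Sum.elim Subtype.val (fun _ => x0) with hg
  -- g is injective on sets of inl's
  have ginj : ∀ S : Finset ({a : V // a ∈ X ∪ nbhd G X} ⊕ Bool),
      (∀ p ∈ S, ∃ a : {a : V // a ∈ X ∪ nbhd G X}, p = Sum.inl a) →
      Set.InjOn g ↑S := by
    intro S hS p hp q hq hpq
    obtain ⟨a, rfl⟩ := hS p hp
    obtain ⟨b, rfl⟩ := hS q hq
    simp only [hg, Sum.elim_inl] at hpq
    exact congrArg Sum.inl (Subtype.ext hpq)
  -- adjacency facts
  have hadjHX : ∀ (a b : {a : V // a ∈ X ∪ nbhd G X}), a.1 ∈ X → b.1 ∈ nbhd G X →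
      G.Adj a.1 b.1 → (HX G X).Adj (Sum.inl a) (Sum.inl b) := by
    intro a b haX hbN hab
    rw [HX, SimpleGraph.fromRel_adj]
    constructor
    · intro hcon
      apply hdisj a.1 haX
      rw [Sum.inl.injEq] at hcon
      rw [hcon]; exact hbN
    · left; exact ⟨haX, hbN, hab⟩
  -- v = inr false is not in I
  have hvadj : (HX G X).Adj (Sum.inr false : ({a : V // a ∈ X ∪ nbhd G X} ⊕ Bool)) (Sum.inr true) := by
    rw [HX, SimpleGraph.fromRel_adj]
    exact ⟨by simp, Or.inl trivial⟩
  have hvI : (Sum.inr false : ({a : V // a ∈ X ∪ nbhd G X} ⊕ Bool)) ∉ I := fun hvI => hI _ hvI _ hw hvadj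
  -- the pieces of I
  set IA : Finset ({a : V // a ∈ X ∪ nbhd G X} ⊕ Bool) := I.filter (fun p => ∃ a : {a : V // a ∈ X ∪ nbhd G X},
    p = Sum.inl a ∧ a.1 ∈ X) with hIA
  set IB : Finset ({a : V // a ∈ X ∪ nbhd G X} ⊕ Bool) := I.filter (fun p => ∃ a : {a : V // a ∈ X ∪ nbhd G X},
    p = Sum.inl a ∧ a.1 ∈ nbhd G X) with hIB
  set A : Finset V := IA.image g with hA
  set B : Finset V := IB.image g with hB
  have hIAinl : ∀ p ∈ IA, ∃ a : {a : V // a ∈ X ∪ nbhd G X}, p = Sum.inl a := by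
    intro p hp
    simp only [hIA, Finset.mem_filter] at hp
    obtain ⟨-, a, rfl, -⟩ := hp; exact ⟨a, rfl⟩
  have hIBinl : ∀ p ∈ IB, ∃ a : {a : V // a ∈ X ∪ nbhd G X}, p = Sum.inl a := by
    intro p hp
    simp only [hIB, Finset.mem_filter] at hp
    obtain ⟨-, a, rfl, -⟩ := hp; exact ⟨a, rfl⟩
  have hcardA : A.card = IA.card := Finset.card_image_of_injOn (ginj _ hIAinl)
  have hcardB : B.card = IB.card := Finset.card_image_of_injOn (ginj _ hIBinl)
  have hAX : A ⊆ X := by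
    intro a ha
    simp only [hA, Finset.mem_image] at ha
    obtain ⟨p, hp, rfl⟩ := ha
    simp only [hIA, Finset.mem_filter] at hp
    obtain ⟨-, b, rfl, hbX⟩ := hp
    simpa [hg] using hbX
  have hBN : B ⊆ nbhd G X := by
    intro a ha
    simp only [hB, Finset.mem_image] at ha
    obtain ⟨p, hp, rfl⟩ := ha
    simp only [hIB, Finset.mem_filter] at hp
    obtain ⟨-, b, rfl, hbN⟩ := hp
    simpa [hg] using hbN
  -- decomposition of I
  have hIdecomp : I = IA ∪ IB ∪ {Sum.inr true} := by
    ext p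
    constructor
    · intro hp
      match p with
      | Sum.inl a =>
        rcases Finset.mem_union.mp a.2 with h | h
        · exact Finset.mem_union_left _ (Finset.mem_union_left _
            (Finset.mem_filter.mpr ⟨hp, a, rfl, h⟩))
        · exact Finset.mem_union_left _ (Finset.mem_union_right _
            (Finset.mem_filter.mpr ⟨hp, a, rfl, h⟩))
      | Sum.inr true => simp
      | Sum.inr false => exact absurd hp hvI
    · intro hp
      rcases Finset.mem_union.mp hp with h | h
      · rcases Finset.mem_union.mp h with h | h
        · exact Finset.mem_of_mem_filter _ h
        · exact Finset.mem_of_mem_filter _ h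
      · rw [Finset.mem_singleton] at h; rw [h]; exact hw
  have hdisjAB : Disjoint IA IB := by
    rw [Finset.disjoint_left]
    intro p hpA hpB
    simp only [hIA, Finset.mem_filter] at hpA
    simp only [hIB, Finset.mem_filter] at hpB
    obtain ⟨-, a, rfl, haX⟩ := hpA
    obtain ⟨-, b, heq, hbN⟩ := hpB
    rw [Sum.inl.injEq] at heq
    exact hdisj a.1 haX (heq ▸ hbN)
  have hdisjw : Disjoint (IA ∪ IB) ({Sum.inr true} : Finset ({a : V // a ∈ X ∪ nbhd G X} ⊕ Bool)) := by
    rw [Finset.disjoint_right]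
    intro p hp hpu
    rw [Finset.mem_singleton] at hp
    rcases Finset.mem_union.mp hpu with h | h
    · obtain ⟨a, ha⟩ := hIAinl p h; rw [hp] at ha; exact nomatch ha
    · obtain ⟨a, ha⟩ := hIBinl p h; rw [hp] at ha; exact nomatch ha
  have hcardI : I.card = IA.card + IB.card + 1 := by
    rw [hIdecomp, Finset.card_union_of_disjoint hdisjw,
      Finset.card_union_of_disjoint hdisjAB, Finset.card_singleton]
  -- B avoids N(A)
  have hBsub : B ⊆ nbhd G X \ nbhd G A := by
    intro b hb
    rw [Finset.mem_sdiff]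
    refine ⟨hBN hb, ?_⟩
    intro hbNA
    simp only [nbhd, Finset.mem_filter] at hbNA
    obtain ⟨-, a, haA, hab⟩ := hbNA
    simp only [hA, Finset.mem_image] at haA
    obtain ⟨p, hpIA, rfl⟩ := haA
    simp only [hIA, Finset.mem_filter] at hpIA
    obtain ⟨hpI, a', rfl, ha'X⟩ := hpIA
    simp only [hg, Sum.elim_inl] at hab
    simp only [hB, Finset.mem_image] at hb
    obtain ⟨q, hqIB, rfl⟩ := hb
    simp only [hIB, Finset.mem_filter] at hqIB
    obtain ⟨hqI, b', rfl, hb'N⟩ := hqIB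
    simp only [hg, Sum.elim_inl] at hab
    exact hI _ hpI _ hqI (hadjHX a' b' ha'X hb'N hab)
  have hNmono : nbhd G A ⊆ nbhd G X := by
    intro v hv
    simp only [nbhd, Finset.mem_filter] at hv ⊢
    obtain ⟨hu, a, ha, hadj⟩ := hv
    exact ⟨hu, a, hAX ha, hadj⟩
  have hBcard : (B.card : ℤ) ≤ ((nbhd G X).card : ℤ) - ((nbhd G A).card : ℤ) := by
    have h1 : B.card ≤ (nbhd G X \ nbhd G A).card := Finset.card_le_card hBsub
    have h2 : (nbhd G X \ nbhd G A).card = (nbhd G X).card - (nbhd G A).card :=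
      Finset.card_sdiff_of_subset hNmono
    have h3 : (nbhd G A).card ≤ (nbhd G X).card := Finset.card_le_card hNmono
    omega
  -- Xlift facts
  have hXliftinl : ∀ p ∈ Xlift G X, ∃ a : {a : V // a ∈ X ∪ nbhd G X}, p = Sum.inl a := by
    intro p hp
    simp only [Xlift, Finset.mem_filter] at hp
    obtain ⟨-, a, rfl, -⟩ := hp; exact ⟨a, rfl⟩
  have hXliftim : (Xlift G X).image g = X := by
    ext x
    simp only [Finset.mem_image]
    constructor
    · rintro ⟨p, hp, rfl⟩
      simp only [Xlift, Finset.mem_filter] at hp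
      obtain ⟨-, a, rfl, haX⟩ := hp
      simpa [hg] using haX
    · intro hx
      refine ⟨Sum.inl ⟨x, Finset.mem_union_left _ hx⟩, ?_, by simp [hg]⟩
      simp only [Xlift, Finset.mem_filter]
      exact ⟨Finset.mem_univ _, ⟨x, Finset.mem_union_left _ hx⟩, rfl, hx⟩
  have hXliftcard : (Xlift G X).card = X.card := by
    conv_rhs => rw [← hXliftim]
    exact (Finset.card_image_of_injOn (ginj _ hXliftinl)).symm
  -- X ∪ {w} is independent in HX
  have hwXlift : (Sum.inr true : ({a : V // a ∈ X ∪ nbhd G X} ⊕ Bool)) ∉ Xlift G X := by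
    intro h
    obtain ⟨a, ha⟩ := hXliftinl _ h
    exact nomatch ha
  have hJind : IsIndep (HX G X) (Xlift G X ∪ {Sum.inr true}) := by
    intro p hp q hq hpq
    have key : ∀ r : ({a : V // a ∈ X ∪ nbhd G X} ⊕ Bool), r ∈ Xlift G X ∪ {Sum.inr true} →
        (r = Sum.inr true) ∨ (∃ a : {a : V // a ∈ X ∪ nbhd G X}, r = Sum.inl a ∧ a.1 ∈ X) := by
      intro r hr
      rcases Finset.mem_union.mp hr with h | h
      · right
        simp only [Xlift, Finset.mem_filter] at h
        exact h.2
      · left; exact Finset.mem_singleton.mp h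
    rw [HX, SimpleGraph.fromRel_adj] at hpq
    obtain ⟨hne, hrel⟩ := hpq
    rcases key p hp with hp' | ⟨a, rfl, haX⟩ <;> rcases key q hq with hq' | ⟨b, rfl, hbX⟩
    · exact hne (hp'.trans hq'.symm)
    · subst hp'; rcases hrel with h | h <;> exact h
    · subst hq'; rcases hrel with h | h <;> exact h
    · rcases hrel with ⟨-, hbN, -⟩ | ⟨-, haN, -⟩
      · exact hdisj b.1 hbX hbN
      · exact hdisj a.1 haX haN
  have halpha : X.card + 1 ≤ alphaG (HX G X) := by
    have hmem : Xlift G X ∪ {Sum.inr true} ∈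
        Finset.univ.powerset.filter (IsIndep (HX G X)) := by
      rw [Finset.mem_filter]
      exact ⟨Finset.mem_powerset.mpr (Finset.subset_univ _), hJind⟩
    have := Finset.le_sup (f := Finset.card) hmem
    rwa [Finset.card_union_of_disjoint (Finset.disjoint_singleton_right.mpr hwXlift),
      Finset.card_singleton, hXliftcard] at this
  -- main case split
  by_cases hAeq : A = X
  · -- B is empty
    have hBempty : B = ∅ := by
      rw [← Finset.subset_empty]
      intro b hb
      have := hBsub hb
      rw [hAeq, Finset.sdiff_self] at this
      exact this
    have hIBempty : IB = ∅ := by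
      rw [← Finset.card_eq_zero]
      rw [← hcardB, hBempty, Finset.card_empty]
    have hIAsub : IA ⊆ Xlift G X := by
      intro p hp
      simp only [hIA, Finset.mem_filter] at hp
      simp only [Xlift, Finset.mem_filter]
      exact ⟨Finset.mem_univ _, hp.2⟩
    have hIAeq : IA = Xlift G X := by
      apply Finset.eq_of_subset_of_card_le hIAsub
      rw [hXliftcard]
      exact ((congrArg Finset.card hAeq).symm.trans hcardA).le
    rw [hIdecomp, hIBempty, Finset.union_empty, hIAeq]
  · -- contradiction case
    exfalso
    have hAss : A ⊂ X := Finset.ssubset_iff_subset_ne.mpr ⟨hAX, hAeq⟩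
    have hlt : gdiff G A < gdiff G X := hmin A hAss
    have hIcard2 : (I.card : ℤ) ≤ (X.card : ℤ) := by
      have h1 : (I.card : ℤ) = (A.card : ℤ) + (B.card : ℤ) + 1 := by
        rw [hcardI, hcardA, hcardB]; push_cast; ring
      have h2 : gdiff G A + 1 ≤ gdiff G X := by omega
      have h3 : gdiff G X = (X.card : ℤ) - ((nbhd G X).card : ℤ) := rfl
      have h4 : gdiff G A = (A.card : ℤ) - ((nbhd G A).card : ℤ) := rfl
      omega
    have : (X.card : ℤ) + 1 ≤ (I.card : ℤ) := by
      rw [hImax]; exact_mod_cast halpha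
    omega
end
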